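/- (Real Shnirelman-type theorem) Let V ∈ ℝ^{n×r} have linearly independent columns and a ∈ ℝ^n. Then μ(J) = μ_{r+1}(J): the best sup-norm approximation error of a by the columns of V over all n rows equals the maximum over all (r+1)-element row subsets of the best approximation error restricted to that subset. -/
import Mathlib

open Module in
/-- Real Shnirelman-type theorem: `μ(J) = μ_{r+1}(J)`. -/
theorem stmt_5 (n r : ℕ) (hn : r + 1 ≤ n) (V : Matrix (Fin n) (Fin r) ℝ) (a : Fin n → ℝ)
    (hV : LinearIndependent ℝ (fun i : Fin r => fun j : Fin n => V j i)) :
    (⨅ u : Fin r → ℝ, ⨆ j, |a j - ∑ i, u i * V j i|) =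
      ⨆ S ∈ {S : Finset (Fin n) | S.card = r + 1},
        ⨅ u : Fin r → ℝ, ⨆ j ∈ S, |a j - ∑ i, u i * V j i| := by
  classical
  have hn' : 0 < n := lt_of_lt_of_le (Nat.succ_pos r) hn
  haveI : Nonempty (Fin n) := ⟨⟨0, hn'⟩⟩
  set f : (Fin r → ℝ) → Fin n → ℝ := fun u j => |a j - ∑ i, u i * V j i| with hf
  have hf0 : ∀ u j, 0 ≤ f u j := fun u j => abs_nonneg _
  -- basic facts about the biSup over a finset
  have hbddA : ∀ (g : Fin n → ℝ), BddAbove (Set.range g) :=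
    fun g => (Set.finite_range g).bddAbove
  have hG0 : ∀ (S : Finset (Fin n)) u, 0 ≤ ⨆ j ∈ S, f u j := by
    intro S u
    exact Real.iSup_nonneg fun j => Real.iSup_nonneg fun _ => hf0 u j
  have hle_bsup : ∀ (S : Finset (Fin n)) u j, j ∈ S → f u j ≤ ⨆ j ∈ S, f u j := by
    intro S u j hj
    calc f u j = ⨆ _ : j ∈ S, f u j := (ciSup_pos (f := fun _ : j ∈ S => f u j) hj).symm
    _ ≤ ⨆ j ∈ S, f u j := le_ciSup (f := fun j => ⨆ _ : j ∈ S, f u j) (hbddA _) j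
  have hbsup_le : ∀ (S : Finset (Fin n)) u (c : ℝ), 0 ≤ c → (∀ j ∈ S, f u j ≤ c) →
      (⨆ j ∈ S, f u j) ≤ c := by
    intro S u c hc h
    exact Real.iSup_le (fun j => Real.iSup_le (fun hj => h j hj) hc) hc
  have hbsup_le_sup : ∀ (S : Finset (Fin n)) u, (⨆ j ∈ S, f u j) ≤ ⨆ j, f u j := by
    intro S u
    refine hbsup_le S u _ (Real.iSup_nonneg fun j => hf0 u j) fun j _ => ?_
    exact le_ciSup (hbddA _) j
  set g : Finset (Fin n) → ℝ := fun S => ⨅ u, ⨆ j ∈ S, f u j with hg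
  have hg_bdd : ∀ S : Finset (Fin n), BddBelow (Set.range fun u => ⨆ j ∈ S, f u j) :=
    fun S => ⟨0, by rintro x ⟨u, rfl⟩; exact hG0 S u⟩
  have hg0 : ∀ S, 0 ≤ g S := fun S => Real.iInf_nonneg fun u => hG0 S u
  have hF_bdd : BddBelow (Set.range fun u => ⨆ j, f u j) :=
    ⟨0, by rintro x ⟨u, rfl⟩; exact Real.iSup_nonneg fun j => hf0 u j⟩
  set M : ℝ := ⨆ S ∈ {S : Finset (Fin n) | S.card = r + 1}, g S with hM
  have hM0 : 0 ≤ M :=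
    Real.iSup_nonneg fun S => Real.iSup_nonneg fun _ => hg0 S
  have hgM : ∀ S : Finset (Fin n), S.card = r + 1 → g S ≤ M := by
    intro S hS
    calc g S = ⨆ _ : S ∈ {S : Finset (Fin n) | S.card = r + 1}, g S := (ciSup_pos (f := fun _ : S ∈ {S : Finset (Fin n) | S.card = r + 1} => g S) hS).symm
    _ ≤ M := le_ciSup (f := fun S => ⨆ _ : S ∈ {S : Finset (Fin n) | S.card = r + 1}, g S) ((Set.finite_range _).bddAbove) S
  refine le_antisymm ?_ ?_
  · -- hard direction, via Helly's theorem
    refine le_of_forall_pos_le_add fun ε hε => ?_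
    -- the convex sets
    set K : Fin n → Set (Fin r → ℝ) := fun j => {u | f u j ≤ M + ε} with hK
    have hconv : ∀ j, Convex ℝ (K j) := by
      intro j
      intro u hu v hv s t hs ht hst
      simp only [K, hf, Set.mem_setOf_eq] at hu hv ⊢
      have : a j - ∑ i, (s • u + t • v) i * V j i
          = s * (a j - ∑ i, u i * V j i) + t * (a j - ∑ i, v i * V j i) := by
        simp only [Pi.add_apply, Pi.smul_apply, smul_eq_mul, add_mul, Finset.sum_add_distrib,
          mul_sub, Finset.mul_sum, mul_assoc]
        linear_combination (-(a j)) * hst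
      rw [this]
      calc |s * (a j - ∑ i, u i * V j i) + t * (a j - ∑ i, v i * V j i)|
          ≤ |s * (a j - ∑ i, u i * V j i)| + |t * (a j - ∑ i, v i * V j i)| := abs_add_le _ _
        _ = s * |a j - ∑ i, u i * V j i| + t * |a j - ∑ i, v i * V j i| := by
            rw [abs_mul, abs_mul, abs_of_nonneg hs, abs_of_nonneg ht]
        _ ≤ s * (M + ε) + t * (M + ε) := by
            have := mul_le_mul_of_nonneg_left hu hs
            have := mul_le_mul_of_nonneg_left hv ht
            linarith
        _ = M + ε := by rw [← add_mul, hst, one_mul]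
    have hfinrank : finrank ℝ (Fin r → ℝ) + 1 = r + 1 := by
      rw [finrank_fin_fun]
    have hhelly : (⋂ j ∈ (Finset.univ : Finset (Fin n)), K j).Nonempty := by
      refine Convex.helly_theorem (𝕜 := ℝ) ?_ (fun j _ => hconv j) ?_
      · rw [hfinrank, Finset.card_univ, Fintype.card_fin]; exact hn
      · intro I _ hI
        rw [hfinrank] at hI
        -- there is u with ⨆ j ∈ I, f u j < M + ε
        have h1 : g I < M + ε := lt_of_le_of_lt (hgM I hI) (lt_add_of_pos_right _ hε)
        obtain ⟨u, hu⟩ := exists_lt_of_ciInf_lt h1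
        exact ⟨u, Set.mem_biInter fun j hj => le_of_lt
          (lt_of_le_of_lt (hle_bsup I u j hj) hu)⟩
    obtain ⟨u, hu⟩ := hhelly
    have hu' : ∀ j, f u j ≤ M + ε := by
      intro j
      have := Set.mem_iInter₂.mp hu j (Finset.mem_univ j)
      exact this
    calc (⨅ u : Fin r → ℝ, ⨆ j, f u j) ≤ ⨆ j, f u j := ciInf_le hF_bdd u
      _ ≤ M + ε := Real.iSup_le hu' (by linarith)
  · -- easy direction
    refine Real.iSup_le (fun S => Real.iSup_le (fun hS => ?_)
      (Real.iInf_nonneg fun u => Real.iSup_nonneg fun j => hf0 u j))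
      (Real.iInf_nonneg fun u => Real.iSup_nonneg fun j => hf0 u j)
    refine le_ciInf fun u => ?_
    exact le_trans (ciInf_le (hg_bdd S) u) (hbsup_le_sup S u)
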